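/- If ν is a probability measure on ℕ with ν(0) > 0, then for the solution u of u(x) = x·φ(u(x)) (φ the generating function of ν), the m-th coefficient of u² is (2/m)·ν^{*m}(m-2); equivalently, Σ_{m'=1}^{m-1} (1/m')ν^{*m'}(m'-1)·(1/(m-m'))ν^{*(m-m')}(m-m'-1) = (2/m)·ν^{*m}(m-2) for every m ≥ 2. -/

import Mathlib

/-- Convolution of two sequences. -/
def conv (f g : ℕ → ℝ) (n : ℕ) : ℝ := ∑ k ∈ Finset.range (n + 1), f k * g (n - k)

/-- `convPow f m` is the `m`-th convolution power of `f` (with `convPow f 0 = δ_0`). -/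
def convPow (f : ℕ → ℝ) : ℕ → ℕ → ℝ
  | 0, n => if n = 0 then 1 else 0
  | m + 1, n => conv f (convPow f m) n

noncomputable section LagrangeAux

open PowerSeries Finset

lemma convPow_succ (f : ℕ → ℝ) (m n : ℕ) :
    convPow f (m + 1) n = conv f (convPow f m) n := rfl

lemma conv_eq_coeff (f g : ℕ → ℝ) (n : ℕ) :
    conv f g n = PowerSeries.coeff n (PowerSeries.mk f * PowerSeries.mk g) := by
  rw [PowerSeries.coeff_mul,
    Finset.Nat.sum_antidiagonal_eq_sum_range_succ
      (fun i j => (PowerSeries.coeff i (PowerSeries.mk f)) *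
        (PowerSeries.coeff j (PowerSeries.mk g)))]
  simp [conv]

lemma convPow_eq_coeff (f : ℕ → ℝ) : ∀ m n, convPow f m n
    = PowerSeries.coeff n ((PowerSeries.mk f) ^ m)
  | 0, n => by simp [convPow, PowerSeries.coeff_one]
  | m + 1, n => by
    have hmk : PowerSeries.mk (fun t => convPow f m t) = (PowerSeries.mk f) ^ m := by
      ext t
      rw [PowerSeries.coeff_mk, convPow_eq_coeff f m t]
    rw [convPow_succ, conv_eq_coeff, hmk, ← pow_succ']

lemma mk_convPow (f : ℕ → ℝ) (m : ℕ) :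
    PowerSeries.mk (fun t => convPow f m t) = (PowerSeries.mk f) ^ m := by
  ext t
  rw [PowerSeries.coeff_mk, convPow_eq_coeff f m t]

/-- the operator x·d/dx on power series -/
def Dop (φ : PowerSeries ℝ) : PowerSeries ℝ := PowerSeries.mk fun n => n * PowerSeries.coeff n φ

lemma Dop_mul (φ ψ : PowerSeries ℝ) : Dop (φ * ψ) = Dop φ * ψ + φ * Dop ψ := by
  ext n
  rw [map_add, PowerSeries.coeff_mul, PowerSeries.coeff_mul]
  simp only [Dop, PowerSeries.coeff_mk, PowerSeries.coeff_mul, Finset.mul_sum]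
  rw [← Finset.sum_add_distrib]
  refine Finset.sum_congr rfl fun p hp => ?_
  have h : p.1 + p.2 = n := Finset.HasAntidiagonal.mem_antidiagonal.mp hp
  have h' : (n : ℝ) = (p.1 : ℝ) + (p.2 : ℝ) := by exact_mod_cast h.symm
  rw [h']; ring

lemma Dop_pow (φ : PowerSeries ℝ) : ∀ m : ℕ,
    Dop (φ ^ (m + 1)) = PowerSeries.C ((m : ℝ) + 1) * (φ ^ m * Dop φ)
  | 0 => by simp
  | m + 1 => by
    rw [pow_succ, Dop_mul, Dop_pow φ m]
    have h2 : PowerSeries.C (((m + 1 : ℕ) : ℝ) + 1)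
        = PowerSeries.C ((m : ℝ) + 1) + 1 := by
      push_cast
      rw [show ((m : ℝ) + 1 + 1) = ((m : ℝ) + 1) + 1 from by ring, map_add, map_one]
    rw [h2]
    ring

/-- derivative identity (B) -/
lemma deriv_identity (ν : ℕ → ℝ) (m n : ℕ) :
    (n : ℝ) * convPow ν (m + 1) n
      = ((m : ℝ) + 1) * ∑ j ∈ Finset.range (n + 1), (j : ℝ) * ν j * convPow ν m (n - j) := by
  have h1 : (n : ℝ) * convPow ν (m + 1) n
      = PowerSeries.coeff n (Dop ((PowerSeries.mk ν) ^ (m + 1))) := by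
    rw [Dop, PowerSeries.coeff_mk, convPow_eq_coeff]
  have h2 : ∑ j ∈ Finset.range (n + 1), (j : ℝ) * ν j * convPow ν m (n - j)
      = PowerSeries.coeff n (Dop (PowerSeries.mk ν) * (PowerSeries.mk ν) ^ m) := by
    have hD : Dop (PowerSeries.mk ν) = PowerSeries.mk (fun j => (j : ℝ) * ν j) := by
      ext t; simp [Dop]
    rw [hD, ← mk_convPow, ← conv_eq_coeff]
    simp [conv]
  rw [h1, h2, Dop_pow, PowerSeries.coeff_C_mul,
    mul_comm ((PowerSeries.mk ν) ^ m) (Dop (PowerSeries.mk ν))]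

/-- the weighted forest numbers -/
def gg (ν : ℕ → ℝ) (r m : ℕ) : ℝ :=
  if m = 0 then (if r = 0 then 1 else 0)
  else if r ≤ m then ((r : ℝ) / (m : ℝ)) * convPow ν m (m - r) else 0

lemma convPow_one' (f : ℕ → ℝ) (n : ℕ) : convPow f 1 n = f n := by
  rw [convPow_eq_coeff, pow_one, PowerSeries.coeff_mk]

lemma convPow_eq_zero (f : ℕ → ℝ) (hf : f 0 = 0) :
    ∀ r n, n < r → convPow f r n = 0 := by
  intro r
  induction r with
  | zero => intro n h; omega
  | succ r ih =>
    intro n hn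
    rw [convPow_succ, conv]
    refine Finset.sum_eq_zero fun k hk => ?_
    rcases Nat.eq_zero_or_pos k with hk0 | hk0
    · rw [hk0, hf, zero_mul]
    · rw [Finset.mem_range] at hk
      rw [ih (n - k) (by omega), mul_zero]

lemma gg_eq_zero (ν : ℕ → ℝ) (r m : ℕ) (h : m < r) : gg ν r m = 0 := by
  unfold gg
  rcases Nat.eq_zero_or_pos m with h0 | h0
  · subst h0; rw [if_pos rfl, if_neg (by omega)]
  · rw [if_neg (by omega), if_neg (by omega)]

/-- recursion (H) for the forest numbers -/
lemma gg_rec (ν : ℕ → ℝ) (s n : ℕ) :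
    gg ν (s + 1) (n + 1) = ∑ j ∈ Finset.range (n + 2), ν j * gg ν (s + j) n := by
  rcases Nat.eq_zero_or_pos n with hn0 | hn
  · subst hn0
    rcases Nat.eq_zero_or_pos s with hs | hs
    · subst hs
      have h1 : convPow ν 1 0 = ν 0 := convPow_one' ν 0
      simp [gg, Finset.sum_range_succ, h1]
    · rw [gg_eq_zero ν (s + 1) 1 (by omega)]
      refine (Finset.sum_eq_zero fun j hj => ?_).symm
      rw [gg_eq_zero ν (s + j) 0 (by omega), mul_zero]
  rcases Nat.lt_or_ge n s with hns | hsn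
  · -- s > n : both sides zero
    rw [gg_eq_zero ν (s + 1) (n + 1) (by omega)]
    refine (Finset.sum_eq_zero fun j hj => ?_).symm
    rw [gg_eq_zero ν (s + j) n (by omega), mul_zero]
  · -- main case : s ≤ n, 1 ≤ n
    have hRHS : ∑ j ∈ Finset.range (n + 2), ν j * gg ν (s + j) n
        = ∑ j ∈ Finset.range (n - s + 1),
            ν j * (((s : ℝ) + (j : ℝ)) / (n : ℝ) * convPow ν n (n - s - j)) := by
      rw [← Finset.sum_subset (Finset.range_subset_range.2 (by omega : n - s + 1 ≤ n + 2))]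
      · refine Finset.sum_congr rfl fun j hj => ?_
        rw [Finset.mem_range] at hj
        unfold gg
        rw [if_neg (by omega), if_pos (by omega : s + j ≤ n),
          show n - (s + j) = n - s - j from by omega]
        push_cast
        ring
      · intro j hj hj2
        rw [Finset.mem_range] at hj hj2
        rw [gg_eq_zero ν (s + j) n (by omega), mul_zero]
    rw [hRHS]
    obtain ⟨n', rfl⟩ : ∃ n', n = n' + 1 := ⟨n - 1, by omega⟩
    set d := n' + 1 - s with hd
    have hds : (d : ℝ) = (n' : ℝ) + 1 - (s : ℝ) := by
      rw [hd, Nat.cast_sub (by omega : s ≤ n' + 1)]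
      push_cast; ring
    have hN1 : ((n' : ℝ) + 1) ≠ 0 := by positivity
    have hN2 : ((n' : ℝ) + 1 + 1) ≠ 0 := by positivity
    have hpeel : convPow ν (n' + 1 + 1) d
        = ∑ j ∈ Finset.range (d + 1), ν j * convPow ν (n' + 1) (d - j) := rfl
    have hB := deriv_identity ν (n' + 1) d
    rw [hpeel] at hB
    push_cast at hB
    rw [hds] at hB
    unfold gg
    rw [if_neg (by omega), if_pos (by omega : s + 1 ≤ n' + 1 + 1),
      show n' + 1 + 1 - (s + 1) = d from by omega, hpeel]
    push_cast
    have hsplit : ∀ j ∈ Finset.range (d + 1),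
        ν j * (((s : ℝ) + (j : ℝ)) / ((n' : ℝ) + 1) * convPow ν (n' + 1) (d - j))
          = ((s : ℝ) * (ν j * convPow ν (n' + 1) (d - j))
              + (j : ℝ) * ν j * convPow ν (n' + 1) (d - j)) / ((n' : ℝ) + 1) := by
      intro j _
      field_simp
    rw [Finset.sum_congr rfl hsplit, ← Finset.sum_div, Finset.sum_add_distrib, ← Finset.mul_sum]
    field_simp
    linear_combination hB

def aSeq (ν : ℕ → ℝ) (k : ℕ) : ℝ := gg ν 1 k

lemma aSeq_zero (ν : ℕ → ℝ) : aSeq ν 0 = 0 := by simp [aSeq, gg]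

/-- the main Lagrange-inversion identity -/
lemma main_E (ν : ℕ → ℝ) : ∀ m r, convPow (aSeq ν) r m = gg ν r m := by
  intro m
  induction m using Nat.strong_induction_on with
  | _ m IH =>
  intro r
  rcases m with _ | n
  · -- m = 0
    rcases r with _ | r
    · simp [convPow, gg]
    · rw [convPow_succ, conv]
      simp [aSeq_zero, gg]
  · -- m = n + 1
    have H' : ∀ r k, 1 ≤ k → k ≤ n + 1 → convPow (aSeq ν) (r + 1) k
        = ∑ j ∈ Finset.range (k + 1), ν j * convPow (aSeq ν) (r + j) (k - 1) := by
      intro r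
      induction r with
      | zero =>
        intro k hk1 hkm
        obtain ⟨k', rfl⟩ : ∃ k', k = k' + 1 := ⟨k - 1, by omega⟩
        rw [convPow_one']
        have h := gg_rec ν 0 k'
        simp only [Nat.zero_add] at h
        show gg ν 1 (k' + 1) = _
        rw [h]
        refine Finset.sum_congr rfl fun j hj => ?_
        rw [show k' + 1 - 1 = k' from rfl, Nat.zero_add, IH k' (by omega) j]
      | succ r ih =>
        intro k hk1 hkm
        rw [convPow_succ, conv, Finset.sum_range_succ,
          convPow_eq_zero (aSeq ν) (aSeq_zero ν) (r + 1) (k - k) (by omega),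
          mul_zero, add_zero]
        have hstep : ∀ i ∈ Finset.range k,
            aSeq ν i * convPow (aSeq ν) (r + 1) (k - i)
              = ∑ j ∈ Finset.range (k + 1),
                  ν j * (aSeq ν i * convPow (aSeq ν) (r + j) (k - 1 - i)) := by
          intro i hi
          rw [Finset.mem_range] at hi
          rw [ih (k - i) (by omega) (by omega), Finset.mul_sum]
          have hz : ∀ j ∈ Finset.range (k + 1), j ∉ Finset.range (k - i + 1) →
              aSeq ν i * (ν j * convPow (aSeq ν) (r + j) (k - i - 1)) = 0 := by
            intro j hj hj2
            rw [Finset.mem_range] at hj hj2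
            rw [convPow_eq_zero (aSeq ν) (aSeq_zero ν) (r + j) (k - i - 1) (by omega),
              mul_zero, mul_zero]
          rw [Finset.sum_subset (Finset.range_subset_range.2 (by omega : k - i + 1 ≤ k + 1)) hz]
          refine Finset.sum_congr rfl fun j hj => ?_
          rw [show k - i - 1 = k - 1 - i from by omega]
          ring
        rw [Finset.sum_congr rfl hstep, Finset.sum_comm]
        refine Finset.sum_congr rfl fun j hj => ?_
        rw [← Finset.mul_sum]
        congr 1
        rw [show r + 1 + j = (r + j) + 1 from by omega, convPow_succ, conv,
          show k - 1 + 1 = k from by omega]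
    rcases r with _ | s
    · simp [convPow, gg]
    · rw [H' s (n + 1) (by omega) (le_refl _), gg_rec]
      refine Finset.sum_congr rfl fun j hj => ?_
      rw [show n + 1 - 1 = n from rfl, IH n (by omega)]

end LagrangeAux

theorem stmt_17 (ν : ℕ → ℝ) (hnn : ∀ a, 0 ≤ ν a) (hprob : ∑' a : ℕ, ν a = 1)
    (hν0 : 0 < ν 0) :
    ∀ m : ℕ, 2 ≤ m →
      ∑ m' ∈ Finset.Ico 1 m,
          ((m' : ℝ)⁻¹ * convPow ν m' (m' - 1)) *
            (((m : ℝ) - (m' : ℝ))⁻¹ * convPow ν (m - m') (m - m' - 1)) =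
        (2 / (m : ℝ)) * convPow ν m (m - 2) := by
  intro m hm
  have h2 : convPow (aSeq ν) 2 m = ∑ k ∈ Finset.range (m + 1), aSeq ν k * aSeq ν (m - k) := by
    rw [convPow_succ, conv]
    refine Finset.sum_congr rfl fun k hk => ?_
    rw [convPow_one']
  have hz : ∀ k ∈ Finset.range (m + 1), k ∉ Finset.Ico 1 m →
      aSeq ν k * aSeq ν (m - k) = 0 := by
    intro k hk hk2
    rw [Finset.mem_range] at hk
    rw [Finset.mem_Ico] at hk2
    rcases Nat.eq_zero_or_pos k with hk0 | hk0
    · rw [hk0, aSeq_zero, zero_mul]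
    · rw [show m - k = 0 from by omega, aSeq_zero, mul_zero]
  have hsub : Finset.Ico 1 m ⊆ Finset.range (m + 1) := by
    intro x hx
    rw [Finset.mem_Ico] at hx
    rw [Finset.mem_range]
    omega
  have h3 : ∑ m' ∈ Finset.Ico 1 m,
      ((m' : ℝ)⁻¹ * convPow ν m' (m' - 1)) *
        (((m : ℝ) - (m' : ℝ))⁻¹ * convPow ν (m - m') (m - m' - 1))
      = ∑ k ∈ Finset.Ico 1 m, aSeq ν k * aSeq ν (m - k) := by
    refine Finset.sum_congr rfl fun k hk => ?_
    rw [Finset.mem_Ico] at hk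
    have ha1 : aSeq ν k = (k : ℝ)⁻¹ * convPow ν k (k - 1) := by
      unfold aSeq gg
      rw [if_neg (by omega), if_pos (by omega : 1 ≤ k)]
      push_cast
      rw [one_div]
    have ha2 : aSeq ν (m - k) = ((m : ℝ) - (k : ℝ))⁻¹ * convPow ν (m - k) (m - k - 1) := by
      unfold aSeq gg
      rw [if_neg (by omega), if_pos (by omega : 1 ≤ m - k)]
      rw [show m - k - 1 = m - k - 1 from rfl]
      rw [Nat.cast_sub (by omega : k ≤ m)]
      push_cast
      rw [one_div]
    rw [ha1, ha2]
  rw [h3, Finset.sum_subset hsub hz, ← h2, main_E]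
  unfold gg
  rw [if_neg (by omega), if_pos (by omega : 2 ≤ m)]
  push_cast
  ring
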